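/- For nonnegative integers k, m with 0 ≤ m ≤ k and 0 ≤ r ≤ k, the identity (−1)^k C(m+r, m) C(2k+m+1, k−r) = ∑_{i=0}^{k−r} (−1)^k C(k−i, r) C(k+i, k) C(k+m−i, m) holds; equivalently, C(m+r, m) C(2k+m+1, k−r) = ∑_{i=0}^{k−r} C(k−i, r) C(k+i, k) C(k+m−i, m). -/

import Mathlib

lemma hockey_aux (k s : ℕ) :
    ∑ i ∈ Finset.range (s + 1), (k + i).choose i = (k + s + 1).choose s := by
  induction s with
  | zero => simp
  | succ s ih =>
    rw [Finset.sum_range_succ, ih]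
    have h : k + (s + 1) + 1 = (k + s + 1) + 1 := by ring
    rw [h, Nat.choose_succ_succ' (k + s + 1) s]
    have h2 : k + (s + 1) = k + s + 1 := by ring
    rw [h2]

lemma conv_aux : ∀ q s k : ℕ,
    ∑ i ∈ Finset.range (s + 1), (k + i).choose i * (q + (s - i)).choose (s - i)
      = (k + q + s + 1).choose s := by
  intro q
  induction q with
  | zero =>
    intro s k
    have : ∀ i ∈ Finset.range (s + 1),
        (k + i).choose i * (0 + (s - i)).choose (s - i) = (k + i).choose i := by
      intro i _
      simp
    rw [Finset.sum_congr rfl this, hockey_aux]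
    norm_num
  | succ q ihq =>
    intro s
    induction s with
    | zero => intro k; simp
    | succ s ihs =>
      intro k
      have split :
          ∑ i ∈ Finset.range (s + 1 + 1),
              (k + i).choose i * ((q + 1) + (s + 1 - i)).choose (s + 1 - i)
            = ∑ i ∈ Finset.range (s + 1 + 1),
                (k + i).choose i * (q + (s + 1 - i)).choose (s + 1 - i)
              + ∑ i ∈ Finset.range (s + 1),
                  (k + i).choose i * ((q + 1) + (s - i)).choose (s - i) := by
        rw [Finset.sum_range_succ (n := s + 1), Finset.sum_range_succ (n := s + 1)]
        have step : ∀ i ∈ Finset.range (s + 1),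
            (k + i).choose i * ((q + 1) + (s + 1 - i)).choose (s + 1 - i)
              = (k + i).choose i * (q + (s + 1 - i)).choose (s + 1 - i)
                + (k + i).choose i * ((q + 1) + (s - i)).choose (s - i) := by
          intro i hi
          rw [Finset.mem_range] at hi
          have h1 : s + 1 - i = (s - i) + 1 := by omega
          rw [h1]
          have h2 : q + 1 + (s - i + 1) = (q + 1 + (s - i)) + 1 := by ring
          rw [h2, Nat.choose_succ_succ' (q + 1 + (s - i)) (s - i)]
          have h3 : q + (s - i + 1) = q + 1 + (s - i) := by ring
          rw [h3]
          ring
        rw [Finset.sum_congr rfl step, Finset.sum_add_distrib]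
        simp
        ring
      rw [split, ihs k, ihq (s + 1) k]
      have h4 : k + (q + 1) + (s + 1) + 1 = (k + q + (s + 1) + 1) + 1 := by ring
      rw [h4, Nat.choose_succ_succ' (k + q + (s + 1) + 1) s]
      have h5 : k + (q + 1) + s + 1 = k + q + (s + 1) + 1 := by ring
      rw [h5]
      ring

theorem sum_choose_inst (k m r : ℕ) (hm : m ≤ k) (hr : r ≤ k) :
    (m + r).choose m * (2 * k + m + 1).choose (k - r)
      = ∑ i ∈ Finset.range (k - r + 1),
          (k - i).choose r * (k + i).choose k * (k + m - i).choose m := by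
  set s := k - r with hs
  have hks : r + s = k := by omega
  have key : ∀ i ∈ Finset.range (s + 1),
      (k - i).choose r * (k + i).choose k * (k + m - i).choose m
        = (m + r).choose m * ((k + i).choose i * ((m + r) + (s - i)).choose (s - i)) := by
    intro i hi
    rw [Finset.mem_range] at hi
    have his : i ≤ s := by omega
    have hik : i ≤ k := by omega
    -- trinomial revision on (k+m-i).choose (k-i) * (k-i).choose (s-i)
    have tri := Nat.choose_mul (n := k + m - i) (k := k - i) (s := s - i)
      (by omega)
    -- rewrite pieces
    have e1 : (k + m - i).choose (k - i) = (k + m - i).choose m :=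
      Nat.choose_symm_of_eq_add (by omega)
    have e2 : (k - i).choose (s - i) = (k - i).choose r :=
      Nat.choose_symm_of_eq_add (by omega)
    have e3 : k + m - i - (s - i) = m + r := by omega
    have e4 : k - i - (s - i) = r := by omega
    rw [e1, e2, e3, e4] at tri
    -- tri : (k+m-i).choose m * (k-i).choose r = (k+m-i).choose (s-i) * (m+r).choose r
    have e5 : (k + i).choose k = (k + i).choose i :=
      Nat.choose_symm_of_eq_add (by omega)
    have e6 : (k + m - i).choose (s - i) = ((m + r) + (s - i)).choose (s - i) := by
      congr 1
      omega
    have e7 : (m + r).choose r = (m + r).choose m :=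
      Nat.choose_symm_of_eq_add (by omega)
    calc (k - i).choose r * (k + i).choose k * (k + m - i).choose m
        = ((k + m - i).choose m * (k - i).choose r) * (k + i).choose k := by ring
      _ = ((k + m - i).choose (s - i) * (m + r).choose r) * (k + i).choose k := by rw [tri]
      _ = (m + r).choose m * ((k + i).choose i * ((m + r) + (s - i)).choose (s - i)) := by
          rw [e5, e6, e7]; ring
  rw [Finset.sum_congr rfl key, ← Finset.mul_sum, conv_aux (m + r) s k]
  have : k + (m + r) + s + 1 = 2 * k + m + 1 := by omega
  rw [this]
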